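/- Let ν be a probability measure on [0,∞) with cumulative distribution function F whose α-moment m = ∫_{[0,∞)} x^α ν(dx) satisfies 0 < m < ∞. Then for every integer n ≥ 2, the tail F̄_n = 1 − F_n satisfies lim_{x→∞} x^{2α} ( F̄_n(x) − n F̄(x) ) = (1/2) n (n−1) m², where F̄ = 1 − F. -/

import Mathlib

open MeasureTheory Filter Real Topology


private def S1fun (n : ℕ) (u : ℝ) : ℝ :=
  ∑ j ∈ Finset.range n, ∑ i ∈ Finset.range j, (1 - u) ^ i

private def S2fun (n : ℕ) (u : ℝ) : ℝ :=
  ∑ i ∈ Finset.range (n - 1), (1 - u) ^ i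

private lemma pow_one_sub_eq (u : ℝ) (k : ℕ) :
    (1 - u) ^ k = 1 - u * ∑ i ∈ Finset.range k, (1 - u) ^ i := by
  linear_combination -(geom_sum_mul (1 - u) k)

private lemma sum_geom_eq (u : ℝ) (k : ℕ) :
    ∑ i ∈ Finset.range k, (1 - u) ^ i
      = (k : ℝ) - u * ∑ j ∈ Finset.range k, ∑ i ∈ Finset.range j, (1 - u) ^ i := by
  rw [Finset.mul_sum, eq_sub_iff_add_eq, ← Finset.sum_add_distrib]
  have h : ∀ j ∈ Finset.range k, ((1 - u) ^ j + u * ∑ i ∈ Finset.range j, (1 - u) ^ i) = (1:ℝ) := by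
    intro j _; linear_combination pow_one_sub_eq u j
  rw [Finset.sum_congr rfl h, Finset.sum_const, Finset.card_range, nsmul_eq_mul, mul_one]

private lemma key_alg (n : ℕ) (hn : 2 ≤ n) (p e d : ℝ) :
    p * p * ((1 - (1 - (e + d)) ^ (n - 1) * ((n : ℝ) * d + (1 - (e + d)))) - (n : ℝ) * e)
      = -(p * e + p * d) ^ 2 * S1fun n (e + d)
        + (n : ℝ) * (p * d) * (p * e + p * d) * S2fun n (e + d) := by
  have e3 : (1 - (e + d)) ^ (n - 1) * (1 - (e + d)) = (1 - (e + d)) ^ n := by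
    rw [← pow_succ]; congr 1; omega
  have e1 : (1 - (e + d)) ^ n = 1 - (e + d) * ((n : ℝ) - (e + d) * S1fun n (e + d)) := by
    rw [pow_one_sub_eq, sum_geom_eq]; rfl
  have e2 : (1 - (e + d)) ^ (n - 1) = 1 - (e + d) * S2fun n (e + d) :=
    pow_one_sub_eq (e + d) (n - 1)
  linear_combination (-(p * p)) * e3 - (p * p) * e1 - (p * p * (n : ℝ) * d) * e2

private lemma S1fun_zero (n : ℕ) (hn : 2 ≤ n) : S1fun n 0 = (n : ℝ) * ((n : ℝ) - 1) / 2 := by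
  have h : S1fun n 0 = ∑ j ∈ Finset.range n, (j : ℝ) := by
    simp [S1fun]
  have h2 := Finset.sum_range_id_mul_two n
  have h3 : ((∑ i ∈ Finset.range n, i : ℕ) : ℝ) * 2 = (n : ℝ) * ((n : ℝ) - 1) := by
    rw [← Nat.cast_ofNat, ← Nat.cast_mul, h2]
    push_cast [Nat.cast_sub (by omega : 1 ≤ n)]
    ring
  rw [h]
  push_cast at h3 ⊢
  linarith

private lemma S2fun_zero (n : ℕ) (hn : 2 ≤ n) : S2fun n 0 = (n : ℝ) - 1 := by
  simp [S2fun]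
  push_cast [Nat.cast_sub (by omega : 1 ≤ n)]
  ring

private lemma contS1 (n : ℕ) : Continuous (S1fun n) := by
  unfold S1fun
  exact continuous_finset_sum _ fun j _ => continuous_finset_sum _ fun i _ =>
    (continuous_const.sub continuous_id).pow i

private lemma contS2 (n : ℕ) : Continuous (S2fun n) := by
  unfold S2fun
  exact continuous_finset_sum _ fun i _ => (continuous_const.sub continuous_id).pow i

-- H tends to m
private lemma tendsto_trunc (α : ℝ) (ν : Measure ℝ) [IsProbabilityMeasure ν]
    (hν : ν (Set.Iio 0) = 0) (hmo : Integrable (fun x => x ^ α) ν) :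
    Tendsto (fun t : ℝ => ∫ x in Set.Icc 0 t, x ^ α ∂ν) atTop (𝓝 (∫ x, x ^ α ∂ν)) := by
  have hae : ∀ᵐ x ∂ν, 0 ≤ x := by
    rw [ae_iff]
    convert hν using 2
    ext x; simp [not_le, Set.mem_Iio]
  have h1 : (fun x : ℝ => x ^ α) =ᵐ[ν] Set.indicator (Set.Ici 0) (fun x => x ^ α) := by
    filter_upwards [hae] with x hx
    rw [Set.indicator_of_mem (Set.mem_Ici.mpr hx)]
  have key := tendsto_integral_filter_of_dominated_convergence (μ := ν) (l := atTop)
    (F := fun (t : ℝ) (x : ℝ) => Set.indicator (Set.Icc 0 t) (fun y => y ^ α) x)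
    (f := Set.indicator (Set.Ici 0) (fun y => y ^ α))
    (bound := fun x => |x ^ α|)
    (Eventually.of_forall fun t => hmo.aestronglyMeasurable.indicator measurableSet_Icc)
    (Eventually.of_forall fun t => Eventually.of_forall fun x => by
      simpa using norm_indicator_le_norm_self (fun y : ℝ => y ^ α) x (s := Set.Icc 0 t))
    hmo.abs
    (Eventually.of_forall fun x => by
      rcases le_or_gt 0 x with hx | hx
      · apply Tendsto.congr' (f₁ := fun _ => x ^ α)
        · filter_upwards [eventually_ge_atTop x] with t ht
          rw [Set.indicator_of_mem (Set.mem_Icc.mpr ⟨hx, ht⟩)]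
        · rw [Set.indicator_of_mem (Set.mem_Ici.mpr hx)]
          exact tendsto_const_nhds
      · rw [Set.indicator_of_notMem (by simpa using hx.not_ge : x ∉ Set.Ici (0:ℝ))]
        apply Tendsto.congr (f₁ := fun _ : ℝ => (0:ℝ))
        · intro t
          exact (Set.indicator_of_notMem (fun hm => absurd hm.1 (not_le.mpr hx)) _).symm
        · exact tendsto_const_nhds)
  have h3 : ∫ x, Set.indicator (Set.Ici 0) (fun y : ℝ => y ^ α) x ∂ν = ∫ x, x ^ α ∂ν :=
    integral_congr_ae h1.symm
  rw [h3] at key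
  refine key.congr fun t => ?_
  exact integral_indicator measurableSet_Icc

-- tail integral → 0
private lemma tendsto_tail_int (α : ℝ) (ν : Measure ℝ) [IsProbabilityMeasure ν]
    (hν : ν (Set.Iio 0) = 0) (hmo : Integrable (fun x => x ^ α) ν) :
    Tendsto (fun t : ℝ => ∫ x in Set.Ioi t, x ^ α ∂ν) atTop (𝓝 0) := by
  have h := (tendsto_const_nhds (x := ∫ x, x ^ α ∂ν) (f := atTop)).sub
    (tendsto_trunc α ν hν hmo)
  rw [sub_self] at h
  refine Tendsto.congr' ?_ h
  filter_upwards [eventually_ge_atTop (0:ℝ)] with t ht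
  have hIic : ∫ x in Set.Iic t, x ^ α ∂ν = ∫ x in Set.Icc 0 t, x ^ α ∂ν := by
    apply setIntegral_congr_set
    rw [Filter.eventuallyEq_set]
    have : ∀ᵐ x ∂ν, 0 ≤ x := by
      rw [ae_iff]; convert hν using 2; ext x; simp [not_le, Set.mem_Iio]
    filter_upwards [this] with x hx
    simp [Set.mem_Iic, Set.mem_Icc, hx]
  have hsplit := integral_add_compl (measurableSet_Iic (a := t)) hmo
  rw [Set.compl_Iic] at hsplit
  rw [← hIic]
  linarith

-- t^α * tail probability → 0
private lemma tendsto_tail_prob (α : ℝ) (hα : 0 < α) (ν : Measure ℝ) [IsProbabilityMeasure ν]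
    (hν : ν (Set.Iio 0) = 0) (hmo : Integrable (fun x => x ^ α) ν) :
    Tendsto (fun t : ℝ => t ^ α * (1 - (ν (Set.Iic t)).toReal)) atTop (𝓝 0) := by
  have htail : ∀ t : ℝ, 1 - (ν (Set.Iic t)).toReal = (ν (Set.Ioi t)).toReal := by
    intro t
    have h := measure_add_measure_compl (μ := ν) (measurableSet_Iic (a := t))
    rw [Set.compl_Iic, measure_univ] at h
    have h2 : (ν (Set.Iic t)).toReal + (ν (Set.Ioi t)).toReal = 1 := by
      rw [← ENNReal.toReal_add (measure_ne_top ν _) (measure_ne_top ν _), h, ENNReal.toReal_one]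
    linarith
  refine tendsto_of_tendsto_of_tendsto_of_le_of_le' tendsto_const_nhds
    (tendsto_tail_int α ν hν hmo) ?_ ?_
  · filter_upwards [eventually_gt_atTop (0:ℝ)] with t ht
    have h1 : (0:ℝ) ≤ t ^ α := (rpow_pos_of_pos ht α).le
    exact mul_nonneg h1 ENNReal.toReal_nonneg |>.trans_eq (by rw [htail])
  · filter_upwards [eventually_gt_atTop (0:ℝ)] with t ht
    rw [htail]
    have h1 : t ^ α * (ν (Set.Ioi t)).toReal = ∫ _ in Set.Ioi t, t ^ α ∂ν := by
      rw [setIntegral_const, smul_eq_mul, mul_comm]; rfl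
    rw [h1]
    refine setIntegral_mono_on (integrableOn_const (measure_ne_top ν _))
      hmo.integrableOn measurableSet_Ioi fun x hx => ?_
    exact rpow_le_rpow ht.le (le_of_lt hx) hα.le

-- the Williamson transform formula
private lemma G_formula (α : ℝ) (hα : 0 < α) (ν : Measure ℝ) [IsProbabilityMeasure ν]
    (hν : ν (Set.Iio 0) = 0) (hmo : Integrable (fun x => x ^ α) ν)
    (t : ℝ) (ht : 0 < t) :
    ∫ x, max (1 - (x / t) ^ α) 0 ∂ν
      = (ν (Set.Iic t)).toReal - t ^ (-α) * ∫ x in Set.Icc 0 t, x ^ α ∂ν := by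
  have hae : ∀ᵐ x ∂ν, 0 ≤ x := by
    rw [ae_iff]; convert hν using 2; ext x; simp [not_le, Set.mem_Iio]
  have h1 : (fun x => max (1 - (x / t) ^ α) 0)
      =ᵐ[ν] Set.indicator (Set.Icc 0 t) (fun x => 1 - x ^ α / t ^ α) := by
    filter_upwards [hae] with x hx
    rcases le_or_gt x t with hxt | hxt
    · rw [Set.indicator_of_mem (Set.mem_Icc.mpr ⟨hx, hxt⟩)]
      rw [max_eq_left, div_rpow hx ht.le]
      have : (x / t) ^ α ≤ 1 :=
        rpow_le_one (div_nonneg hx ht.le) ((div_le_one ht).mpr hxt) hα.le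
      linarith
    · rw [Set.indicator_of_notMem (fun hm => absurd hm.2 (not_le.mpr hxt))]
      rw [max_eq_right]
      have : (1:ℝ) < (x / t) ^ α := by
        rw [one_lt_rpow_iff_of_pos (div_pos (ht.trans hxt) ht)]
        exact Or.inl ⟨(one_lt_div ht).mpr hxt, hα⟩
      linarith
  rw [integral_congr_ae h1, integral_indicator measurableSet_Icc]
  have h2 : ∫ x in Set.Icc 0 t, (1 - x ^ α / t ^ α) ∂ν
      = ∫ _ in Set.Icc 0 t, (1:ℝ) ∂ν - ∫ x in Set.Icc 0 t, x ^ α / t ^ α ∂ν :=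
    integral_sub (integrableOn_const (measure_ne_top ν _))
      (hmo.integrableOn.div_const _)
  rw [h2, setIntegral_const, smul_eq_mul, mul_one, integral_div]
  have h3 : ν (Set.Icc 0 t) = ν (Set.Iic t) := by
    apply le_antisymm (measure_mono Set.Icc_subset_Iic_self)
    calc ν (Set.Iic t) ≤ ν (Set.Icc 0 t ∪ Set.Iio 0) := by
          apply measure_mono; intro x hx
          rcases le_or_gt 0 x with h | h
          · exact Or.inl ⟨h, hx⟩
          · exact Or.inr h
      _ ≤ ν (Set.Icc 0 t) + ν (Set.Iio 0) := measure_union_le _ _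
      _ = ν (Set.Icc 0 t) := by rw [hν, add_zero]
  rw [measureReal_def, h3, rpow_neg ht.le, inv_mul_eq_div]


/-- if the α-moment m = ∫ x^α ν(dx) satisfies 0 < m < ∞, then for every
n ≥ 2 the tail of the n-fold Kendall convolution power satisfies
lim_{x→∞} x^{2α} ( F̄_n(x) − n F̄(x) ) = (1/2) n(n−1) m². -/
theorem kendall_power_tail_finite_moment
    (α : ℝ) (hα : 0 < α)
    (ν : Measure ℝ) [IsProbabilityMeasure ν] (hν : ν (Set.Iio 0) = 0)
    (F G H : ℝ → ℝ)
    (hF : ∀ t, F t = (ν (Set.Iic t)).toReal)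
    (hG : ∀ t, 0 < t → G t = ∫ x, max (1 - (x / t) ^ α) 0 ∂ν)
    (hH : ∀ t, 0 < t → H t = ∫ x in Set.Icc 0 t, x ^ α ∂ν)
    (hmo : Integrable (fun x => x ^ α) ν)
    (hmpos : 0 < ∫ x, x ^ α ∂ν)
    (n : ℕ) (hn : 2 ≤ n)
    (Fn : ℝ → ℝ)
    (hFn : ∀ t, 0 < t → Fn t = (G t) ^ (n - 1) * ((n : ℝ) * t ^ (-α) * H t + G t)) :
    Tendsto (fun x => x ^ (2 * α) * ((1 - Fn x) - (n : ℝ) * (1 - F x))) atTop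
      (𝓝 ((n : ℝ) * ((n : ℝ) - 1) / 2 * (∫ x, x ^ α ∂ν) ^ 2)) := by
  set m := ∫ x, x ^ α ∂ν with hm
  have hHlim : Tendsto H atTop (𝓝 m) := by
    refine Tendsto.congr' ?_ (tendsto_trunc α ν hν hmo)
    filter_upwards [eventually_gt_atTop (0:ℝ)] with t ht
    exact (hH t ht).symm
  have halim : Tendsto (fun t => t ^ α * (1 - F t)) atTop (𝓝 0) := by
    simp only [hF]
    exact tendsto_tail_prob α hα ν hν hmo
  have hFtail_nonneg : ∀ t : ℝ, 0 ≤ 1 - F t := by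
    intro t
    rw [hF]
    have : (ν (Set.Iic t)).toReal ≤ 1 := by
      simpa using ENNReal.toReal_mono ENNReal.one_ne_top prob_le_one
    linarith
  have hF0 : Tendsto (fun t => 1 - F t) atTop (𝓝 0) := by
    refine tendsto_of_tendsto_of_tendsto_of_le_of_le' tendsto_const_nhds halim
      (Eventually.of_forall hFtail_nonneg) ?_
    filter_upwards [eventually_ge_atTop (1:ℝ)] with t ht
    exact le_mul_of_one_le_left (hFtail_nonneg t) (one_le_rpow ht hα.le)
  have hdlim : Tendsto (fun t : ℝ => t ^ (-α) * H t) atTop (𝓝 0) := by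
    simpa using (tendsto_rpow_neg_atTop hα).mul hHlim
  have hulim : Tendsto (fun t => (1 - F t) + t ^ (-α) * H t) atTop (𝓝 0) := by
    simpa using hF0.add hdlim
  have hsum : Tendsto (fun t => t ^ α * (1 - F t) + H t) atTop (𝓝 (0 + m)) := halim.add hHlim
  have hS1 : Tendsto (fun t => S1fun n ((1 - F t) + t ^ (-α) * H t)) atTop (𝓝 (S1fun n 0)) :=
    ((contS1 n).tendsto 0).comp hulim
  have hS2 : Tendsto (fun t => S2fun n ((1 - F t) + t ^ (-α) * H t)) atTop (𝓝 (S2fun n 0)) :=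
    ((contS2 n).tendsto 0).comp hulim
  have hglim : Tendsto (fun t => -(t ^ α * (1 - F t) + H t) ^ 2 * S1fun n ((1 - F t) + t ^ (-α) * H t)
      + (n : ℝ) * H t * (t ^ α * (1 - F t) + H t) * S2fun n ((1 - F t) + t ^ (-α) * H t)) atTop
      (𝓝 (-(0 + m) ^ 2 * S1fun n 0 + (n : ℝ) * m * (0 + m) * S2fun n 0)) :=
    ((hsum.pow 2).neg.mul hS1).add
      (((tendsto_const_nhds.mul hHlim).mul hsum).mul hS2)
  have hval : -(0 + m) ^ 2 * S1fun n 0 + (n : ℝ) * m * (0 + m) * S2fun n 0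
      = (n : ℝ) * ((n : ℝ) - 1) / 2 * m ^ 2 := by
    rw [S1fun_zero n hn, S2fun_zero n hn]; ring
  rw [hval] at hglim
  refine Tendsto.congr' ?_ hglim
  filter_upwards [eventually_ge_atTop (1:ℝ)] with t ht
  have ht0 : (0:ℝ) < t := lt_of_lt_of_le one_pos ht
  have hGt : G t = (1 : ℝ) - ((1 - F t) + t ^ (-α) * H t) := by
    rw [hG t ht0, G_formula α hα ν hν hmo t ht0, ← hF t, ← hH t ht0]; ring
  have hpd : t ^ α * (t ^ (-α) * H t) = H t := by
    rw [rpow_neg ht0.le, ← mul_assoc, mul_inv_cancel₀ (ne_of_gt (rpow_pos_of_pos ht0 α)), one_mul]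
  have h2a : t ^ (2 * α) = t ^ α * t ^ α := by
    rw [show (2:ℝ) * α = α + α by ring, rpow_add ht0]
  have hk := key_alg n hn (t ^ α) (1 - F t) (t ^ (-α) * H t)
  rw [hpd] at hk
  rw [← mul_assoc ((n:ℝ)) (t ^ (-α)) (H t)] at hk
  rw [hFn t ht0, hGt, h2a]
  exact hk.symm
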